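/- An infinite word ξ is quasiperiodic with quasiperiod q if and only if ξ ∈ P_q^ω, i.e., ξ is an infinite concatenation of words from P_q. -/
import Mathlib


/-- `u ^ n` for lists: concatenation of `n` copies of `u`. -/
def listPow {X : Type*} (u : List X) : ℕ → List X
  | 0 => []
  | n+1 => u ++ listPow u n

/-- `P_q = { v : e ⊏ v ⊑ q ⊏ v·q }`. -/
def Pq {X : Type*} (q : List X) : Set (List X) :=
  {v | v ≠ [] ∧ v <+: q ∧ q <+: v ++ q}

/-- membership in the submonoid `P^*` generated by `P`. -/
def InStar {X : Type*} (P : Set (List X)) (w : List X) : Prop :=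
  ∃ l : List (List X), (∀ v ∈ l, v ∈ P) ∧ w = l.flatten

/-- A finite word `w` is quasiperiodic with quasiperiod `q`. -/
def QuasiPeriodic {X : Type*} (q w : List X) : Prop :=
  ∀ j < w.length, ∃ u : List X, u.length ≤ j ∧ j < u.length + q.length ∧ (u ++ q) <+: w

/-- `Q_q`: the set of finite words quasiperiodic with quasiperiod `q`. -/
def Qq {X : Type*} (q : List X) : Set (List X) := {w | QuasiPeriodic q w}

/-- `u` is a (finite) prefix of the infinite word `ξ`. -/
def InfPrefix {X : Type*} (ξ : ℕ → X) (u : List X) : Prop :=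
  u = (List.range u.length).map ξ

/-- An infinite word `ξ` is quasiperiodic with quasiperiod `q`. -/
def QuasiPeriodicInf {X : Type*} (q : List X) (ξ : ℕ → X) : Prop :=
  ∀ j : ℕ, ∃ u : List X, u.length ≤ j ∧ j < u.length + q.length ∧ InfPrefix ξ (u ++ q)

/-- the star root `P \ (P²·P*)`. -/
def StarRoot {X : Type*} (P : Set (List X)) : Set (List X) :=
  {v | v ∈ P ∧ ¬ ∃ (a b : List X) (l : List (List X)),
    a ∈ P ∧ b ∈ P ∧ (∀ x ∈ l, x ∈ P) ∧ v = a ++ b ++ l.flatten}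

/-- `ξ ∈ P^ω`: infinite concatenation of nonempty words of `P`. -/
def InOmega {X : Type*} (P : Set (List X)) (ξ : ℕ → X) : Prop :=
  ∃ f : ℕ → List X, (∀ i, f i ∈ P ∧ f i ≠ []) ∧
    ∀ n, InfPrefix ξ ((List.range n).map f).flatten


namespace Stmt5Aux
variable {X : Type*}

def W (ξ : ℕ → X) (a n : ℕ) : List X := (List.range n).map (fun i => ξ (a + i))

@[simp] lemma W_length (ξ : ℕ → X) (a n : ℕ) : (W ξ a n).length = n := by simp [W]

lemma W_append (ξ : ℕ → X) (a m n : ℕ) :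
    W ξ a m ++ W ξ (a + m) n = W ξ a (m + n) := by
  simp [W, List.range_add, Function.comp_def, Nat.add_assoc]

lemma W_prefix (ξ : ℕ → X) (a : ℕ) {m n : ℕ} (h : m ≤ n) : W ξ a m <+: W ξ a n :=
  ⟨W ξ (a + m) (n - m), by rw [W_append, Nat.add_sub_cancel' h]⟩

lemma infPrefix_W (ξ : ℕ → X) (n : ℕ) : InfPrefix ξ (W ξ 0 n) := by
  simp [InfPrefix, W]

lemma infPrefix_of_prefix {ξ : ℕ → X} {u v : List X} (h : u <+: v)
    (hv : InfPrefix ξ v) : InfPrefix ξ u := by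
  have hl := h.length_le
  have : u = v.take u.length := (List.prefix_iff_eq_take.mp h)
  rw [this, hv]
  simp [InfPrefix, ← List.map_take, List.take_range, Nat.min_eq_left hl]

lemma infPrefix_append_iff {ξ : ℕ → X} {u q : List X} :
    InfPrefix ξ (u ++ q) ↔ u = W ξ 0 u.length ∧ q = W ξ u.length q.length := by
  have hW : (List.range (u.length + q.length)).map ξ
      = W ξ 0 u.length ++ W ξ u.length q.length := by
    have := (W_append ξ 0 u.length q.length).symm
    simpa [W, Nat.zero_add] using this
  constructor
  · intro h
    rw [InfPrefix, List.length_append, hW] at h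
    have hlen : u.length = (W ξ 0 u.length).length := by simp
    exact ⟨(List.append_inj h hlen).1, (List.append_inj h hlen).2⟩
  · rintro ⟨h1, h2⟩
    rw [InfPrefix, List.length_append, hW]
    exact congrArg₂ (· ++ ·) h1 h2

end Stmt5Aux

/-- An infinite word has quasiperiod `q` iff it lies in `P_q^ω`. -/
theorem stmt5 {X : Type*} (q : List X) (hq : q ≠ []) (ξ : ℕ → X) :
    QuasiPeriodicInf q ξ ↔ InOmega (Pq q) ξ := by
  open Stmt5Aux in
  constructor
  · -- quasiperiodic → InOmega
    intro h
    -- occurrences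
    have occ0 : q = W ξ 0 q.length := by
      obtain ⟨u, hu1, hu2, hu3⟩ := h 0
      have hu0 : u = [] := List.eq_nil_of_length_eq_zero (Nat.le_zero.mp hu1)
      have := (infPrefix_append_iff.mp hu3).2
      rwa [hu0] at this
    have next : ∀ p : ℕ, ∃ r, p < r ∧ r ≤ p + q.length ∧ q = W ξ r q.length := by
      intro p
      obtain ⟨u, hu1, hu2, hu3⟩ := h (p + q.length)
      exact ⟨u.length, by omega, hu1, (infPrefix_append_iff.mp hu3).2⟩
    choose nxt h1 h2 h3 using next
    set pos : ℕ → ℕ := fun n => nxt^[n] 0 with hpos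
    have pos0 : pos 0 = 0 := rfl
    have pos_succ : ∀ n, pos (n + 1) = nxt (pos n) := by
      intro n; simp [hpos, Function.iterate_succ_apply']
    have occ_pos : ∀ n, q = W ξ (pos n) q.length := by
      intro n
      cases n with
      | zero => exact occ0
      | succ m => rw [pos_succ]; exact h3 (pos m)
    have pos_lt : ∀ n, pos n < pos (n + 1) := fun n => by rw [pos_succ]; exact h1 _
    have pos_le : ∀ n, pos (n + 1) ≤ pos n + q.length := fun n => by
      rw [pos_succ]; exact h2 _
    set f : ℕ → List X := fun n => W ξ (pos n) (pos (n + 1) - pos n) with hf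
    have hd : ∀ n, pos n + (pos (n + 1) - pos n) = pos (n + 1) := fun n => by
      have := pos_lt n; omega
    refine ⟨f, fun n => ⟨⟨?_, ?_, ?_⟩, ?_⟩, ?_⟩
    · -- f n ≠ []
      intro hnil
      have hlen : (f n).length = 0 := by rw [hnil]; rfl
      have hlt := pos_lt n
      simp [hf] at hlen
      omega
    · -- f n <+: q
      rw [occ_pos n]
      exact W_prefix ξ (pos n) (by have := pos_lt n; have := pos_le n; omega)
    · -- q <+: f n ++ q
      have hfq : f n ++ q = W ξ (pos n) ((pos (n + 1) - pos n) + q.length) := by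
        have hw := W_append ξ (pos n) (pos (n + 1) - pos n) q.length
        rw [hd n] at hw
        rw [hf, ← hw, ← occ_pos (n + 1)]
      rw [hfq]
      conv_lhs => rw [occ_pos n]
      exact W_prefix ξ (pos n) (by omega)
    · -- f n ≠ [] (second copy)
      intro hnil
      have hlen : (f n).length = 0 := by rw [hnil]; rfl
      have hlt := pos_lt n
      simp [hf] at hlen
      omega
    · -- flattening prefixes
      have hflat : ∀ n, ((List.range n).map f).flatten = W ξ 0 (pos n) := by
        intro n
        induction n with
        | zero => simp [pos0, W]
        | succ m ih =>
          rw [List.range_succ]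
          simp only [List.map_append, List.map_cons, List.map_nil,
            List.flatten_append, List.flatten_cons, List.flatten_nil, ih,
            List.append_nil]
          rw [hf]
          have := W_append ξ 0 (pos m) (pos (m + 1) - pos m)
          rw [Nat.zero_add] at this
          rw [this, hd m]
      intro n
      rw [hflat n]
      exact infPrefix_W ξ (pos n)
  · -- InOmega → quasiperiodic
    rintro ⟨f, hf, hpre⟩ j
    set s : ℕ → ℕ := fun n => (((List.range n).map f).flatten).length with hs
    have hflat_succ : ∀ n, ((List.range (n + 1)).map f).flatten
        = ((List.range n).map f).flatten ++ f n := by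
      intro n; rw [List.range_succ]; simp
    have hs0 : s 0 = 0 := by simp [hs]
    have hs_succ : ∀ n, s (n + 1) = s n + (f n).length := by
      intro n; simp only [hs]; rw [hflat_succ n, List.length_append]
    have hfq : ∀ n, (f n).length ≤ q.length := fun n => ((hf n).1).2.1.length_le
    have hfpos : ∀ n, 0 < (f n).length := fun n => List.length_pos_iff.mpr (hf n).2
    have hmono : ∀ n, s n < s (n + 1) := fun n => by
      have := hfpos n; rw [hs_succ]; omega
    -- find n with s n ≤ j < s (n+1)
    have hfind : ∀ j : ℕ, ∃ n, s n ≤ j ∧ j < s (n + 1) := by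
      intro j
      induction j with
      | zero => exact ⟨0, by omega, by have := hmono 0; omega⟩
      | succ m ih =>
        obtain ⟨n, hn1, hn2⟩ := ih
        by_cases hc : m + 1 < s (n + 1)
        · exact ⟨n, by omega, hc⟩
        · exact ⟨n + 1, by omega, by have := hmono (n + 1); omega⟩
    obtain ⟨n, hn1, hn2⟩ := hfind j
    set u : List X := ((List.range n).map f).flatten with hu
    have hslen : u.length = s n := rfl
    -- step growth: s n + k ≤ s (n + k)
    have hgrow : ∀ k, s n + k ≤ s (n + k) := by
      intro k
      induction k with
      | zero => simp
      | succ m ih =>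
        have h1 := hmono (n + m)
        rw [show n + (m + 1) = n + m + 1 from rfl]
        omega
    -- chain: u ++ q <+: flatten (n+k) ++ q
    have hchain : ∀ k, u ++ q <+: ((List.range (n + k)).map f).flatten ++ q := by
      intro k
      induction k with
      | zero => simp [hu]
      | succ m ih =>
        refine ih.trans ?_
        rw [show n + (m + 1) = n + m + 1 from rfl, hflat_succ (n + m), List.append_assoc]
        obtain ⟨t, ht⟩ := ((hf (n + m)).1).2.2
        exact ⟨t, by rw [List.append_assoc, ht]⟩
    have hkey := hchain q.length
    have hsdef : ∀ m : ℕ, (((List.range m).map f).flatten).length = s m := by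
      intro m; simp only [hs]
    have hlenle : (u ++ q).length ≤ (((List.range (n + q.length)).map f).flatten).length := by
      rw [List.length_append, hslen, hsdef]
      exact hgrow q.length
    have hpref : u ++ q <+: ((List.range (n + q.length)).map f).flatten :=
      List.prefix_of_prefix_length_le hkey (List.prefix_append _ _) hlenle
    refine ⟨u, by omega, ?_, infPrefix_of_prefix hpref (hpre (n + q.length))⟩
    have := hfq n
    have := hs_succ n
    omega
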